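/- Let PQ be a segment in ℝ² with midpoint m, and let L, R be on opposite sides of line PQ with triangles LPQ, RPQ a non-degenerate Delaunay pair with circumcenters c_λ, c_ρ. Consider the quadrilateral dual region of vertex P contributed by this pair, assembled from the four elementary dual triangles (P, m, c_λ), (P, m, c_ρ) with DEC signs. Then the net signed area equals ½·⟨m − P, m − P⟩^{1/2} times a positive quantity; concretely, writing u for the unit normal to PQ pointing toward R and hλ = ⟨c_λ − m, u⟩, hρ = ⟨c_ρ − m, u⟩, the net signed area is ½·|P m|·(hρ − hλ) > 0. -/

import Mathlib

open scoped RealInnerProductSpace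

/-- The planar determinant `det(v, w)` of two vectors of `ℝ²`. -/
noncomputable def det2 (v w : EuclideanSpace ℝ (Fin 2)) : ℝ := v 0 * w 1 - v 1 * w 0

/-- Unsigned area of the triangle with vertices `p`, `q`, `r` in `ℝ²`. -/
noncomputable def triArea (p q r : EuclideanSpace ℝ (Fin 2)) : ℝ :=
  |det2 (q - p) (r - p)| / 2

set_option maxHeartbeats 1000000 in
/-- For a non-degenerate Delaunay pair of triangles `LPQ`, `RPQ` across edge `PQ` with
midpoint `m`, circumcenters `cl`, `cr`, and `u` the unit normal to `PQ` toward `R`'s side: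
the net signed area of the two elementary dual triangles `(P, m, cl)` and `(P, m, cr)` of
vertex `P` (with DEC signs) equals `½ · |Pm| · (hρ - hλ)` where `hλ = ⟪cl - m, u⟫` and
`hρ = ⟪cr - m, u⟫`, and this quantity is strictly positive. -/
theorem vertex_dual_pair_area_formula
    (P Q L R cl cr m u : EuclideanSpace ℝ (Fin 2))
    (hPQ : P ≠ Q)
    (hm : m = midpoint ℝ P Q)
    (hu : ‖u‖ = 1) (huPQ : ⟪u, Q - P⟫ = 0)
    (hLside : ⟪L - m, u⟫ < 0) (hRside : 0 < ⟪R - m, u⟫)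
    (hclP : dist cl P = dist cl Q) (hclL : dist cl P = dist cl L)
    (hcrP : dist cr P = dist cr Q) (hcrR : dist cr P = dist cr R)
    (hDel : dist R cl > dist P cl) :
    (if ⟪cl - m, u⟫ < 0 then (1 : ℝ) else -1) * triArea P m cl
        + (if 0 < ⟪cr - m, u⟫ then (1 : ℝ) else -1) * triArea P m cr
      = 1 / 2 * dist P m * (⟪cr - m, u⟫ - ⟪cl - m, u⟫) ∧
    0 < 1 / 2 * dist P m * (⟪cr - m, u⟫ - ⟪cl - m, u⟫) := by
  have inner2 : ∀ v w : EuclideanSpace ℝ (Fin 2), ⟪v, w⟫ = v 0 * w 0 + v 1 * w 1 := by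
    intro v w; simp [PiLp.inner_apply, Fin.sum_univ_two]; ring
  have dist2 : ∀ v w : EuclideanSpace ℝ (Fin 2),
      dist v w ^ 2 = (v 0 - w 0) ^ 2 + (v 1 - w 1) ^ 2 := by
    intro v w
    rw [EuclideanSpace.dist_eq, Real.sq_sqrt (by positivity)]
    simp [Fin.sum_univ_two, Real.dist_eq, sq_abs]
  have sub0 : ∀ (v w : EuclideanSpace ℝ (Fin 2)) (i : Fin 2), (v - w) i = v i - w i :=
    fun _ _ _ => rfl
  -- coordinates of the midpoint
  have hm0 : m 0 = (P 0 + Q 0) / 2 := by rw [hm]; simp [midpoint_eq_smul_add]; ring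
  have hm1 : m 1 = (P 1 + Q 1) / 2 := by rw [hm]; simp [midpoint_eq_smul_add]; ring
  have hab : (Q 0 - P 0) ^ 2 + (Q 1 - P 1) ^ 2 ≠ 0 := by
    intro h
    apply hPQ
    have h0 : P 0 = Q 0 := by nlinarith [sq_nonneg (Q 0 - P 0), sq_nonneg (Q 1 - P 1)]
    have h1 : P 1 = Q 1 := by nlinarith [sq_nonneg (Q 0 - P 0), sq_nonneg (Q 1 - P 1)]
    ext i
    fin_cases i
    · simpa using h0
    · simpa using h1
  -- unit normal facts
  have unorm : u 0 ^ 2 + u 1 ^ 2 = 1 := by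
    have h : ‖u‖ ^ 2 = 1 := by rw [hu]; norm_num
    rw [← dist_zero_right, dist2] at h
    simpa using h
  have uperp : u 0 * (Q 0 - P 0) + u 1 * (Q 1 - P 1) = 0 := by
    have h := huPQ
    rw [inner2] at h
    simp only [sub0] at h
    linarith
  -- circumcenters lie on the perpendicular bisector
  have perp : ∀ c : EuclideanSpace ℝ (Fin 2), dist c P = dist c Q →
      (c 0 - m 0) * (Q 0 - P 0) + (c 1 - m 1) * (Q 1 - P 1) = 0 := by
    intro c h
    have h2 : dist c P ^ 2 = dist c Q ^ 2 := by rw [h]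
    rw [dist2, dist2] at h2
    rw [hm0, hm1]
    linear_combination h2 / 2
  have pcl := perp cl hclP
  have pcr := perp cr hcrP
  -- heights
  set hl : ℝ := ⟪cl - m, u⟫ with hhl
  set hr : ℝ := ⟪cr - m, u⟫ with hhr
  have hlc : hl = (cl 0 - m 0) * u 0 + (cl 1 - m 1) * u 1 := by
    rw [hhl, inner2]; simp only [sub0]
  have hrc : hr = (cr 0 - m 0) * u 0 + (cr 1 - m 1) * u 1 := by
    rw [hhr, inner2]; simp only [sub0]
  -- a vector perpendicular to the edge is a multiple of u
  have decomp : ∀ v0 v1 : ℝ, v0 * (Q 0 - P 0) + v1 * (Q 1 - P 1) = 0 →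
      v0 = (v0 * u 0 + v1 * u 1) * u 0 ∧ v1 = (v0 * u 0 + v1 * u 1) * u 1 := by
    intro v0 v1 hv
    have hcross : v0 * u 1 - v1 * u 0 = 0 := by
      have h1 : (v0 * u 1 - v1 * u 0) * (Q 0 - P 0) = 0 := by
        linear_combination u 1 * hv - v1 * uperp
      have h2 : (v0 * u 1 - v1 * u 0) * (Q 1 - P 1) = 0 := by
        linear_combination (-(u 0)) * hv + v0 * uperp
      rcases mul_eq_zero.mp h1 with h | h
      · exact h
      · rcases mul_eq_zero.mp h2 with h' | h'
        · exact h'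
        · exact absurd (by rw [h, h']; ring) hab
    constructor
    · linear_combination u 1 * hcross - v0 * unorm
    · linear_combination (-(u 0)) * hcross - v1 * unorm
  obtain ⟨cl0, cl1⟩ := decomp (cl 0 - m 0) (cl 1 - m 1) pcl
  obtain ⟨cr0, cr1⟩ := decomp (cr 0 - m 0) (cr 1 - m 1) pcr
  rw [← hlc] at cl0 cl1
  rw [← hrc] at cr0 cr1
  have e0 : cl 0 = m 0 + hl * u 0 := by linarith
  have e1 : cl 1 = m 1 + hl * u 1 := by linarith
  have f0 : cr 0 = m 0 + hr * u 0 := by linarith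
  have f1 : cr 1 = m 1 + hr * u 1 := by linarith
  -- the base determinant
  set D : ℝ := (m 0 - P 0) * u 1 - (m 1 - P 1) * u 0 with hD
  have absD : |D| = dist P m := by
    have hDsq : D ^ 2 = dist P m ^ 2 := by
      rw [dist2, hD, hm0, hm1]
      linear_combination ((Q 0 - P 0) ^ 2 + (Q 1 - P 1) ^ 2) / 4 * unorm
        - (u 0 * (Q 0 - P 0) + u 1 * (Q 1 - P 1)) / 4 * uperp
    nlinarith [sq_abs D, abs_nonneg D, dist_nonneg (x := P) (y := m), hDsq]
  -- areas of the elementary dual triangles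
  have areal : triArea P m cl = |hl| * |D| / 2 := by
    unfold triArea det2
    simp only [sub0]
    rw [← abs_mul]
    congr 2
    rw [hD, e0, e1]; ring
  have arear : triArea P m cr = |hr| * |D| / 2 := by
    unfold triArea det2
    simp only [sub0]
    rw [← abs_mul]
    congr 2
    rw [hD, f0, f1]; ring
  -- the equality
  have heq : (if hl < 0 then (1 : ℝ) else -1) * triArea P m cl
        + (if 0 < hr then (1 : ℝ) else -1) * triArea P m cr
      = 1 / 2 * dist P m * (hr - hl) := by
    rw [areal, arear, ← absD]
    rcases lt_or_ge hl 0 with h | h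
    · rw [if_pos h]
      rcases lt_or_ge 0 hr with h' | h'
      · rw [if_pos h', abs_of_neg h, abs_of_pos h']; ring
      · rw [if_neg (not_lt.mpr h'), abs_of_neg h, abs_of_nonpos h']; ring
    · rw [if_neg (not_lt.mpr h), abs_of_nonneg h]
      rcases lt_or_ge 0 hr with h' | h'
      · rw [if_pos h', abs_of_pos h']; ring
      · rw [if_neg (not_lt.mpr h'), abs_of_nonpos h']; ring
  -- positivity
  have hmP : 0 < dist P m := by
    rw [dist_pos, hm]
    intro h
    exact hPQ ((midpoint_eq_left_iff (R := ℝ)).mp h.symm)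
  have hRmu : 0 < (R 0 - m 0) * u 0 + (R 1 - m 1) * u 1 := by
    have h := hRside
    rw [inner2] at h
    simp only [sub0] at h
    linarith
  have hDelsq : dist P cl ^ 2 < dist R cl ^ 2 := by
    nlinarith [hDel, dist_nonneg (x := P) (y := cl)]
  have heqcr : dist R cr ^ 2 = dist P cr ^ 2 := by
    rw [dist_comm R cr, dist_comm P cr, ← hcrR]
  have key : 0 < (hr - hl) * ((R 0 - m 0) * u 0 + (R 1 - m 1) * u 1) := by
    rw [dist2, dist2] at hDelsq heqcr
    rw [e0, e1] at hDelsq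
    rw [f0, f1] at heqcr
    have hmPu : (m 0 - P 0) * u 0 + (m 1 - P 1) * u 1 = 0 := by
      rw [hm0, hm1]
      linarith [uperp]
    have hid : 2 * (hr - hl) * ((R 0 - m 0) * u 0 + (R 1 - m 1) * u 1)
        = (((R 0 - (m 0 + hl * u 0)) ^ 2 + (R 1 - (m 1 + hl * u 1)) ^ 2)
            - ((P 0 - (m 0 + hl * u 0)) ^ 2 + (P 1 - (m 1 + hl * u 1)) ^ 2))
          - (((R 0 - (m 0 + hr * u 0)) ^ 2 + (R 1 - (m 1 + hr * u 1)) ^ 2)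
            - ((P 0 - (m 0 + hr * u 0)) ^ 2 + (P 1 - (m 1 + hr * u 1)) ^ 2)) := by
      linear_combination (-2 * (hr - hl)) * hmPu
    linarith [hid, hDelsq, heqcr]
  have hpos : 0 < hr - hl := by
    by_contra h
    push_neg at h
    have := mul_nonpos_of_nonpos_of_nonneg h hRmu.le
    linarith
  exact ⟨heq, mul_pos (mul_pos (by norm_num) hmP) hpos⟩
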